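/- Let L_C, L_D, L_E > 0. Define d(u,v,w) := (v+w)*sqrt(u*v/(w*(u+v+w))) for u,v,w > 0, define x := (-L_D*(L_C+L_D) + sqrt(L_D*(L_C+L_D)*(L_D+L_E)*(L_C+L_D+L_E)))/(L_C + 2*L_D + L_E), y := L_C*(L_C+L_D+x)/(L_C + 2*L_D + 2*x), and p := L_C*(L_C+L_D+L_E)/(L_C + 2*L_D + 2*L_E). Then 2*log(L_C+L_D+x-y) - log(d(y, L_C-y, L_D+x)) - log(d(L_E-x, L_D+x, L_C-y)) + 2*log(L_D+L_E) - log(d(L_C,L_D,L_E)) - 2*log(L_C+L_D+L_E-p) + log(d(p, L_C-p, L_D+L_E)) = log( (1/2)*sqrt( (L_C*(2*L_D+L_E) + 2*(L_D*(L_D+L_E) + sqrt(L_D*(L_C+L_D)*(L_D+L_E)*(L_C+L_D+L_E)))) / (L_D*(L_C+L_D+L_E)) ) ). -/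

import Mathlib

/-- The Euclidean diameter `d(u,v,w) = (v+w)·√(uv/(w(u+v+w)))` of the horocycle based
at the common endpoint of consecutive boundary intervals of lengths `u, v` and passing
through the crossing point of the geodesics over the interval configurations `(u,v)`
and `(v,w)`. -/
noncomputable def horoDiam (u v w : ℝ) : ℝ :=
  (v + w) * Real.sqrt (u * v / (w * (u + v + w)))

set_option maxHeartbeats 2000000 in
/-- **The renormalized length combination for `ΔE_W(AB:DE)` (Appendix A).**
Let `L_C, L_D, L_E > 0`, and let `x`, `y`, `p` be as in the Appendix A computation.
Then the renormalized length combination `⌢gh + ⌢ah - ⌢af` equals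
`log((1/2)·√((L_C(2L_D+L_E) + 2(L_D(L_D+L_E) +
√(L_D(L_C+L_D)(L_D+L_E)(L_C+L_D+L_E))))/(L_D(L_C+L_D+L_E))))`. -/
theorem deltaEW_formula (LC LD LE : ℝ) (hC : 0 < LC) (hD : 0 < LD) (hE : 0 < LE) :
    let x := (-(LD * (LC + LD)) +
        Real.sqrt (LD * (LC + LD) * (LD + LE) * (LC + LD + LE))) / (LC + 2 * LD + LE)
    let y := LC * (LC + LD + x) / (LC + 2 * LD + 2 * x)
    let p := LC * (LC + LD + LE) / (LC + 2 * LD + 2 * LE)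
    2 * Real.log (LC + LD + x - y) - Real.log (horoDiam y (LC - y) (LD + x)) -
        Real.log (horoDiam (LE - x) (LD + x) (LC - y)) +
        2 * Real.log (LD + LE) - Real.log (horoDiam LC LD LE) -
        2 * Real.log (LC + LD + LE - p) + Real.log (horoDiam p (LC - p) (LD + LE)) =
      Real.log ((1 / 2) *
        Real.sqrt ((LC * (2 * LD + LE) + 2 * (LD * (LD + LE) +
            Real.sqrt (LD * (LC + LD) * (LD + LE) * (LC + LD + LE)))) /
          (LD * (LC + LD + LE)))) := by
  intro x y p
  have hx : x = (-(LD * (LC + LD)) +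
      Real.sqrt (LD * (LC + LD) * (LD + LE) * (LC + LD + LE))) / (LC + 2 * LD + LE) := rfl
  have hy : y = LC * (LC + LD + x) / (LC + 2 * LD + 2 * x) := rfl
  have hp : p = LC * (LC + LD + LE) / (LC + 2 * LD + 2 * LE) := rfl
  clear_value x y p
  set S : ℝ := Real.sqrt (LD * (LC + LD) * (LD + LE) * (LC + LD + LE)) with hSdef
  clear_value S
  have hPpos : (0:ℝ) < LD * (LC + LD) * (LD + LE) * (LC + LD + LE) := by positivity
  have hS2 : S ^ 2 = LD * (LC + LD) * (LD + LE) * (LC + LD + LE) := by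
    rw [hSdef]; exact Real.sq_sqrt hPpos.le
  have hSpos : 0 < S := by rw [hSdef]; exact Real.sqrt_pos.mpr hPpos
  have hT : (0:ℝ) < LC + 2 * LD + LE := by linarith
  have hSgt : LD * (LC + LD) < S := by
    nlinarith [hS2, hSpos, mul_pos (mul_pos hD (show (0:ℝ) < LC + LD by linarith))
      (show (0:ℝ) < 2 * LD * LE + LE * LC + LE ^ 2 by positivity)]
  have hPM : LD * (LC + LD) * (LD + LE) * (LC + LD + LE)
      < (LD * (LC + LD) + LE * (LC + 2 * LD + LE)) ^ 2 := by
    nlinarith [ mul_pos (mul_pos hE hE) (mul_pos hE hE),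
      mul_pos hD (mul_pos hE (mul_pos hE hE)), mul_pos hD (mul_pos hD (mul_pos hE hE)),
      mul_pos hD (mul_pos hD (mul_pos hD hE)), mul_pos hC (mul_pos hE (mul_pos hE hE)),
      mul_pos hC (mul_pos hD (mul_pos hE hE)), mul_pos hC (mul_pos hD (mul_pos hD hE)),
      mul_pos hC (mul_pos hC (mul_pos hE hE)), mul_pos hC (mul_pos hC (mul_pos hD hE))]
  have hSlt : S < LD * (LC + LD) + LE * (LC + 2 * LD + LE) := by
    calc S < Real.sqrt ((LD * (LC + LD) + LE * (LC + 2 * LD + LE)) ^ 2) := by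
          rw [hSdef]; exact Real.sqrt_lt_sqrt hPpos.le hPM
      _ = LD * (LC + LD) + LE * (LC + 2 * LD + LE) := Real.sqrt_sq (by positivity)
  have hxpos : 0 < x := by rw [hx]; exact div_pos (by linarith) hT
  have hxE : x < LE := by rw [hx]; rw [div_lt_iff₀ hT]; nlinarith
  have hS : S = x * (LC + 2 * LD + LE) + LD * (LC + LD) := by
    rw [hx]; field_simp; ring
  have hxq : (x * (LC + 2 * LD + LE) + LD * (LC + LD)) ^ 2
      = LD * (LC + LD) * (LD + LE) * (LC + LD + LE) := by rw [← hS]; exact hS2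
  have hyden : (0:ℝ) < LC + 2 * LD + 2 * x := by linarith
  have hpden : (0:ℝ) < LC + 2 * LD + 2 * LE := by linarith
  have hypos : 0 < y := by rw [hy]; positivity
  have hyC : y < LC := by
    rw [hy, div_lt_iff₀ hyden]; nlinarith
  have hppos : 0 < p := by rw [hp]; positivity
  have hpC : p < LC := by
    rw [hp, div_lt_iff₀ hpden]; nlinarith
  have hA : (0:ℝ) < LC + LD + x - y := by linarith
  have hF : (0:ℝ) < LC + LD + LE - p := by linarith
  -- ratio arguments
  set r1 : ℝ := y * (LC - y) / ((LD + x) * (y + (LC - y) + (LD + x))) with hr1def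
  clear_value r1
  set r2 : ℝ := (LE - x) * (LD + x) / ((LC - y) * ((LE - x) + (LD + x) + (LC - y))) with hr2def
  clear_value r2
  set r3 : ℝ := LC * LD / (LE * (LC + LD + LE)) with hr3def
  clear_value r3
  set r4 : ℝ := p * (LC - p) / ((LD + LE) * (p + (LC - p) + (LD + LE))) with hr4def
  clear_value r4
  have hr1 : 0 < r1 := by
    rw [hr1def]
    have h1 : (0:ℝ) < LC - y := by linarith
    have h2 : (0:ℝ) < LD + x := by linarith
    have h3 : (0:ℝ) < y + (LC - y) + (LD + x) := by linarith
    positivity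
  have hr2 : 0 < r2 := by
    rw [hr2def]
    have h1 : (0:ℝ) < LE - x := by linarith
    have h2 : (0:ℝ) < LD + x := by linarith
    have h3 : (0:ℝ) < LC - y := by linarith
    have h4 : (0:ℝ) < (LE - x) + (LD + x) + (LC - y) := by linarith
    positivity
  have hr3 : 0 < r3 := by rw [hr3def]; positivity
  have hr4 : 0 < r4 := by
    rw [hr4def]
    have h1 : (0:ℝ) < LC - p := by linarith
    have h2 : (0:ℝ) < p + (LC - p) + (LD + LE) := by linarith
    positivity
  -- expand each horoDiam log
  have hlog1 : Real.log (horoDiam y (LC - y) (LD + x))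
      = Real.log (LC + LD + x - y) + Real.log r1 / 2 := by
    unfold horoDiam
    rw [← hr1def,
      Real.log_mul (by linarith) (ne_of_gt (Real.sqrt_pos.mpr hr1)),
      Real.log_sqrt hr1.le, show (LC - y) + (LD + x) = LC + LD + x - y by ring]
  have hlog2 : Real.log (horoDiam (LE - x) (LD + x) (LC - y))
      = Real.log (LC + LD + x - y) + Real.log r2 / 2 := by
    unfold horoDiam
    rw [← hr2def,
      Real.log_mul (by linarith) (ne_of_gt (Real.sqrt_pos.mpr hr2)),
      Real.log_sqrt hr2.le, show (LD + x) + (LC - y) = LC + LD + x - y by ring]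
  have hlog3 : Real.log (horoDiam LC LD LE)
      = Real.log (LD + LE) + Real.log r3 / 2 := by
    unfold horoDiam
    rw [← hr3def,
      Real.log_mul (by linarith) (ne_of_gt (Real.sqrt_pos.mpr hr3)),
      Real.log_sqrt hr3.le]
  have hlog4 : Real.log (horoDiam p (LC - p) (LD + LE))
      = Real.log (LC + LD + LE - p) + Real.log r4 / 2 := by
    unfold horoDiam
    rw [← hr4def,
      Real.log_mul (by linarith) (ne_of_gt (Real.sqrt_pos.mpr hr4)),
      Real.log_sqrt hr4.le, show (LC - p) + (LD + LE) = LC + LD + LE - p by ring]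
  -- the key algebraic identity
  set R0 : ℝ := (LC * (2 * LD + LE) + 2 * (LD * (LD + LE) + S)) / (LD * (LC + LD + LE))
    with hR0def
  clear_value R0
  have hR0 : 0 < R0 := by
    rw [hR0def]
    have h1 : (0:ℝ) < LC * (2 * LD + LE) := by positivity
    have h2 : (0:ℝ) < LD * (LD + LE) := by positivity
    have h3 : (0:ℝ) < LC * (2 * LD + LE) + 2 * (LD * (LD + LE) + S) := by linarith
    positivity
  have hM2pos : (0:ℝ) < 2*LC*LD + LC*x + 2*LD^2 + 2*LD*x + LC*LE + 2*LD*LE + 2*LE*x := by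
    have h1 := mul_pos hC hD
    have h2 := mul_pos hC hxpos
    have h3 := mul_pos hD hD
    have h4 := mul_pos hD hxpos
    have h5 := mul_pos hC hE
    have h6 := mul_pos hD hE
    have h7 := mul_pos hE hxpos
    linarith [h1, h2, h3, h4, h5, h6, h7]
  have hne1 : (LC + 2*LD + 2*x : ℝ) ≠ 0 := ne_of_gt hyden
  have hne2 : (LC + 2*LD + 2*LE : ℝ) ≠ 0 := ne_of_gt hpden
  have hne3 : (LD + x : ℝ) ≠ 0 := by positivity
  have hne4 : (LC + LD + x : ℝ) ≠ 0 := by positivity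
  have hne5 : (LC + LD + LE : ℝ) ≠ 0 := by positivity
  have hne6 : (LD + LE : ℝ) ≠ 0 := by positivity
  have hne7 : (LE - x : ℝ) ≠ 0 := ne_of_gt (by linarith)
  have hne8 : (2*LC*LD + LC*x + 2*LD^2 + 2*LD*x + LC*LE + 2*LD*LE + 2*LE*x : ℝ) ≠ 0 :=
    ne_of_gt hM2pos
  have hCne : (LC:ℝ) ≠ 0 := ne_of_gt hC
  have hDne : (LD:ℝ) ≠ 0 := ne_of_gt hD
  have hEne : (LE:ℝ) ≠ 0 := ne_of_gt hE
  have hy1 : LC - y = LC*(LD+x)/(LC+2*LD+2*x) := by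
    rw [hy]; field_simp; ring
  have hy2 : LC+LD+LE-y
      = (2*LC*LD + LC*x + 2*LD^2 + 2*LD*x + LC*LE + 2*LD*LE + 2*LE*x)/(LC+2*LD+2*x) := by
    rw [hy]; field_simp; ring
  have hp1 : LC - p = LC*(LD+LE)/(LC+2*LD+2*LE) := by
    rw [hp]; field_simp; ring
  have hF1 : LC+LD+LE-p = (LC+LD+LE)*(2*(LD+LE))/(LC+2*LD+2*LE) := by
    rw [hp]; field_simp; ring
  have hr1' : r1 = LC^2/(LC+2*LD+2*x)^2 := by
    rw [hr1def, show y + (LC - y) + (LD + x) = LC + LD + x by ring, hy1, hy]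
    field_simp
  have hr2' : r2 = (LE-x)*(LC+2*LD+2*x)^2
      /(LC*(2*LC*LD + LC*x + 2*LD^2 + 2*LD*x + LC*LE + 2*LD*LE + 2*LE*x)) := by
    rw [hr2def, show (LE - x) + (LD + x) + (LC - y) = LC + LD + LE - y by ring, hy1, hy2]
    field_simp
  have hr4' : r4 = LC^2/(LC+2*LD+2*LE)^2 := by
    rw [hr4def, show p + (LC - p) + (LD + LE) = LC + LD + LE by ring, hp1, hp]
    field_simp
  have hRHS : (LD + LE) ^ 2 * r4 / ((LC + LD + LE - p) ^ 2 * (r1 * (r2 * r3)))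
      = LE * (2*LC*LD + LC*x + 2*LD^2 + 2*LD*x + LC*LE + 2*LD*LE + 2*LE*x)
        / (4 * (LD * ((LE - x) * (LC + LD + LE)))) := by
    rw [hr1', hr2', hr3def, hr4', hF1]
    field_simp
    ring
  have key : (1/4) * R0 = (LD + LE) ^ 2 * r4 / ((LC + LD + LE - p) ^ 2 * (r1 * (r2 * r3))) := by
    rw [hRHS, hR0def, hS]
    field_simp
    apply mul_right_cancel₀ (ne_of_gt hT)
    linear_combination (-(2:ℝ)) * hxq
  -- RHS rewrite
  have hrhs : Real.log ((1/2) * Real.sqrt R0) = Real.log ((1/4) * R0) / 2 := by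
    rw [show (1/2) * Real.sqrt R0 = Real.sqrt ((1/4) * R0) by
      rw [Real.sqrt_mul (by norm_num : (0:ℝ) ≤ 1/4) R0,
        show (1/4:ℝ) = (1/2)^2 by norm_num, Real.sqrt_sq (by norm_num : (0:ℝ) ≤ 1/2)],
      Real.log_sqrt (by positivity)]
  have hexp : Real.log ((1/4) * R0)
      = 2 * Real.log (LD + LE) + Real.log r4
        - (2 * Real.log (LC + LD + LE - p) + (Real.log r1 + (Real.log r2 + Real.log r3))) := by
    have hB2 : ((LD + LE) ^ 2 : ℝ) ≠ 0 := by positivity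
    have hF2 : ((LC + LD + LE - p) ^ 2 : ℝ) ≠ 0 := ne_of_gt (pow_pos hF 2)
    have h23 : r2 * r3 ≠ 0 := ne_of_gt (mul_pos hr2 hr3)
    have h123 : r1 * (r2 * r3) ≠ 0 := ne_of_gt (mul_pos hr1 (mul_pos hr2 hr3))
    rw [key, Real.log_div (mul_ne_zero hB2 (ne_of_gt hr4)) (mul_ne_zero hF2 h123),
      Real.log_mul hB2 (ne_of_gt hr4),
      Real.log_mul hF2 h123,
      Real.log_mul (ne_of_gt hr1) h23,
      Real.log_mul (ne_of_gt hr2) (ne_of_gt hr3),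
      Real.log_pow, Real.log_pow]
    push_cast
    ring
  rw [hlog1, hlog2, hlog3, hlog4, hrhs, hexp]
  ring
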